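/- Let (X, D) be a locally compact, complete metric space, α > 1, and Ω ⊆ X an open set with D_α(Ω) ≠ ∅. Let (d_n)_{n∈ℕ} ⊆ D_α(Ω) and d ∈ D_α(Ω). Suppose the functionals J_{d_n} Γ-converge to J_d on B(Ω), i.e.: (liminf) for every sequence (μ_n) ⊆ B(Ω) converging weakly* to μ ∈ B(Ω) one has J_d(μ) ≤ liminf_n J_{d_n}(μ_n); (limsup) for every μ ∈ B(Ω) there exists (μ_n) ⊆ B(Ω) converging weakly* to μ with limsup_n J_{d_n}(μ_n) ≤ J_d(μ). Then d_n → d uniformly on compact subsets of Ω × Ω. -/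

import Mathlib

open Filter MeasureTheory Set
open scoped ENNReal Topology

/-- Length of the curve `γ` on the interval `[a, b]`, with respect to the
(candidate) distance `d`, defined as a supremum over finite partitions. -/
noncomputable def pathLengthOn {E : Type*} (d : E → E → ℝ) (γ : ℝ → E) (a b : ℝ) : ℝ≥0∞ :=
  ⨆ (k : ℕ) (t : Fin (k + 1) → ℝ) (_ : Monotone t) (_ : t 0 = a) (_ : t (Fin.last k) = b),
    ∑ i : Fin k, ENNReal.ofReal (d (γ (t i.succ)) (γ (t i.castSucc)))

/-- Length of the curve `γ : [0,1] → E` with respect to `d`. -/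
noncomputable def pathLength {E : Type*} (d : E → E → ℝ) (γ : ℝ → E) : ℝ≥0∞ :=
  pathLengthOn d γ 0 1

/-- `d` is a distance on `E`. -/
def IsDistance {E : Type*} (d : E → E → ℝ) : Prop :=
  (∀ x y, d x y = d y x) ∧ (∀ x y z, d x z ≤ d x y + d y z) ∧ ∀ x y, d x y = 0 ↔ x = y

/-- `γ : [0,1] → E` is a Lipschitz curve with respect to `d`. -/
def LipCurve {E : Type*} (d : E → E → ℝ) (γ : ℝ → E) : Prop :=
  ∃ K : ℝ, ∀ s ∈ Icc (0 : ℝ) 1, ∀ t ∈ Icc (0 : ℝ) 1, d (γ s) (γ t) ≤ K * |s - t|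

/-- `(E, d)` is a length space: `d x y` is the infimum of lengths of Lipschitz
curves `γ : [0,1] → E` joining `x` to `y`. -/
def IsLengthDist {E : Type*} (d : E → E → ℝ) : Prop :=
  ∀ x y : E, ENNReal.ofReal (d x y) =
    ⨅ (γ : ℝ → E) (_ : LipCurve d γ) (_ : γ 0 = x) (_ : γ 1 = y), pathLength d γ

/-- `d ∈ 𝒟_α(Ω)` : `d` is a distance on `Ω` making it a length space and satisfying
`α⁻¹ D ≤ d ≤ α D`. -/
def MemD {X : Type*} [MetricSpace X] (α : ℝ) (Ω : Set X) (d : Ω → Ω → ℝ) : Prop :=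
  IsDistance d ∧ IsLengthDist d ∧
    ∀ x y : Ω, α⁻¹ * dist (x : X) (y : X) ≤ d x y ∧ d x y ≤ α * dist (x : X) (y : X)

/-- Uniform convergence `dn → d` on compact subsets of `E × E`. -/
def TendstoUnifCompactly {E : Type*} [TopologicalSpace E]
    (dn : ℕ → E → E → ℝ) (d : E → E → ℝ) : Prop :=
  ∀ K : Set (E × E), IsCompact K → ∀ ε : ℝ, 0 < ε →
    ∃ N : ℕ, ∀ n ≥ N, ∀ p ∈ K, |dn n p.1 p.2 - d p.1 p.2| < ε

/-- `e` is a continuous extension of `d : Ω → Ω → ℝ` to the closure of `Ω`. -/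
def IsContExt {X : Type*} [MetricSpace X] (Ω : Set X) (d : Ω → Ω → ℝ)
    (e : closure Ω → closure Ω → ℝ) : Prop :=
  Continuous (fun p : closure Ω × closure Ω => e p.1 p.2) ∧
    ∀ x y : Ω, e ⟨x, subset_closure x.2⟩ ⟨y, subset_closure y.2⟩ = d x y

/-- `(E, d)` is a geodesic space: any two points are joined by a constant-speed curve
`γ : [0,1] → E` whose length on each subinterval `[t,s]` equals `d (γ t) (γ s)`. -/
def IsGeodesicDist {E : Type*} (d : E → E → ℝ) : Prop :=
  ∀ x y : E, ∃ γ : ℝ → E, γ 0 = x ∧ γ 1 = y ∧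
    (∀ t s : ℝ, 0 ≤ t → t ≤ s → s ≤ 1 →
      pathLengthOn d γ t s = pathLength d γ * ENNReal.ofReal (s - t)) ∧
    ∀ t s : ℝ, 0 ≤ t → t ≤ s → s ≤ 1 →
      pathLengthOn d γ t s = ENNReal.ofReal (d (γ t) (γ s))

/-- Uniform convergence on `[0,1]` of a sequence of curves. -/
def UnifConvCurves {E : Type*} [MetricSpace E] (γn : ℕ → ℝ → E) (γ : ℝ → E) : Prop :=
  ∀ ε : ℝ, 0 < ε → ∃ N : ℕ, ∀ n ≥ N, ∀ t ∈ Icc (0 : ℝ) 1, dist (γn n t) (γ t) < ε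

/-- Γ-convergence of the length functionals `L_{dn}` to `L_d` on the space of
Lipschitz curves `[0,1] → E` with the topology of uniform convergence. -/
def GammaConvLengths {E : Type*} [MetricSpace E] (dn : ℕ → E → E → ℝ) (d : E → E → ℝ) : Prop :=
  (∀ (γn : ℕ → ℝ → E) (γ : ℝ → E),
      (∀ n, LipCurve (fun x y : E => dist x y) (γn n)) →
      LipCurve (fun x y : E => dist x y) γ → UnifConvCurves γn γ →
      pathLength d γ ≤ liminf (fun n => pathLength (dn n) (γn n)) atTop) ∧
  ∀ γ : ℝ → E, LipCurve (fun x y : E => dist x y) γ →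
    ∃ γn : ℕ → ℝ → E, (∀ n, LipCurve (fun x y : E => dist x y) (γn n)) ∧
      UnifConvCurves γn γ ∧
      limsup (fun n => pathLength (dn n) (γn n)) atTop ≤ pathLength d γ

/-- Weak* convergence of finite Borel measures, tested against `C₀` functions. -/
def WeakStarConv {Y : Type*} [TopologicalSpace Y] [MeasurableSpace Y]
    (μn : ℕ → Measure Y) (μ : Measure Y) : Prop :=
  ∀ f : ZeroAtInftyContinuousMap Y ℝ,
    Tendsto (fun n => ∫ y, f y ∂ μn n) atTop (𝓝 (∫ y, f y ∂ μ))

/-- The functional `J_d(μ) = ∫ d(x,y) dμ(x,y)`. -/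
noncomputable def Jfun {X : Type*} [MetricSpace X] {Ω : Set X} [MeasurableSpace X]
    (d : Ω → Ω → ℝ) (μ : Measure (Ω × Ω)) : ℝ≥0∞ :=
  ∫⁻ p, ENNReal.ofReal (d p.1 p.2) ∂ μ

section AuxLemmas

variable {X : Type*} [MetricSpace X] {Ω : Set X} {α : ℝ}

lemma memD_nonneg (hα : 1 < α) {e : Ω → Ω → ℝ} (h : MemD α Ω e) (a b : Ω) : 0 ≤ e a b := by
  have h1 := (h.2.2 a b).1
  have h2 : (0:ℝ) ≤ α⁻¹ * dist (a : X) (b : X) := by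
    have : (0:ℝ) < α := lt_trans one_pos hα
    positivity
  linarith

lemma memD_sub_le (hα : 1 < α) {e : Ω → Ω → ℝ} (h : MemD α Ω e) (a b a' b' : Ω) :
    e a b - e a' b' ≤ α * dist (a : X) (a' : X) + α * dist (b : X) (b' : X) := by
  have t1 : e a b ≤ e a a' + e a' b := h.1.2.1 a a' b
  have t2 : e a' b ≤ e a' b' + e b' b := h.1.2.1 a' b' b
  have s1 : e b' b = e b b' := h.1.1 b' b
  have u1 : e a a' ≤ α * dist (a : X) (a' : X) := (h.2.2 a a').2
  have u2 : e b b' ≤ α * dist (b : X) (b' : X) := (h.2.2 b b').2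
  linarith

end AuxLemmas

set_option maxHeartbeats 1000000

/-- Γ-convergence of the functionals `J_{dn}` to `J_d` implies uniform
convergence of the distances on compact subsets of `Ω × Ω`. -/
theorem stmt6 {X : Type*} [MetricSpace X] [MeasurableSpace X] [BorelSpace X]
    [LocallyCompactSpace X] [CompleteSpace X]
    (Ω : Set X) (hΩ : IsOpen Ω) (α : ℝ) (hα : 1 < α)
    (hne : ∃ d₀ : Ω → Ω → ℝ, MemD α Ω d₀)
    (dn : ℕ → Ω → Ω → ℝ) (hdn : ∀ n, MemD α Ω (dn n))
    (d : Ω → Ω → ℝ) (hd : MemD α Ω d)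
    (hliminf : ∀ (μn : ℕ → Measure (Ω × Ω)) (μ : Measure (Ω × Ω)),
      (∀ n, IsFiniteMeasure (μn n)) → IsFiniteMeasure μ → WeakStarConv μn μ →
      Jfun d μ ≤ liminf (fun n => Jfun (dn n) (μn n)) atTop)
    (hlimsup : ∀ μ : Measure (Ω × Ω), IsFiniteMeasure μ →
      ∃ μn : ℕ → Measure (Ω × Ω), (∀ n, IsFiniteMeasure (μn n)) ∧ WeakStarConv μn μ ∧
        limsup (fun n => Jfun (dn n) (μn n)) atTop ≤ Jfun d μ) :
    TendstoUnifCompactly dn d := by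
  have hα0 : (0:ℝ) < α := lt_trans one_pos hα
  -- Pointwise convergence
  have hpt : ∀ (x y : Ω) (δ : ℝ), 0 < δ → ∀ᶠ n in atTop, |dn n x y - d x y| < δ := by
    intro x y δ hδ
    set z : ↥Ω × ↥Ω := (x, y) with hz
    have hd0 : 0 ≤ d x y := memD_nonneg hα hd x y
    have hJd : Jfun d (Measure.dirac z) = ENNReal.ofReal (d x y) := by
      simp [Jfun, lintegral_dirac, hz]
    have hJn : ∀ n, Jfun (dn n) (Measure.dirac z) = ENNReal.ofReal (dn n x y) := by
      intro n; simp [Jfun, lintegral_dirac, hz]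
    -- Lower bound, via the constant sequence of Dirac masses
    have hws : WeakStarConv (fun _ : ℕ => Measure.dirac z) (Measure.dirac z) :=
      fun f => tendsto_const_nhds
    have hlow := hliminf (fun _ => Measure.dirac z) (Measure.dirac z)
      (fun _ => inferInstance) inferInstance hws
    rw [hJd] at hlow
    simp only [hJn] at hlow
    have hlowE : ∀ᶠ n in atTop, d x y - δ < dn n x y := by
      rcases lt_or_ge (d x y) δ with h | h
      · exact Eventually.of_forall fun n => by
          have := memD_nonneg hα (hdn n) x y; linarith
      · have hlt : ENNReal.ofReal (d x y - δ) < liminf (fun n => ENNReal.ofReal (dn n x y)) atTop := by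
          refine lt_of_lt_of_le ?_ hlow
          rw [ENNReal.ofReal_lt_ofReal_iff (by linarith)]
          linarith
        filter_upwards [eventually_lt_of_lt_liminf hlt] with n hn
        by_contra hc
        push_neg at hc
        exact absurd (hn.trans_le (ENNReal.ofReal_le_ofReal hc)) (lt_irrefl _)
    -- Upper bound, via the recovery sequence of `hlimsup`
    -- Choose a small radius ε around x and y
    obtain ⟨Kx, hKxc, hKxn⟩ := exists_compact_mem_nhds (x : X)
    obtain ⟨Ky, hKyc, hKyn⟩ := exists_compact_mem_nhds (y : X)
    obtain ⟨εx, hεx, hbx⟩ := Metric.nhds_basis_closedBall.mem_iff.1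
      (Filter.inter_mem hKxn (hΩ.mem_nhds x.2))
    obtain ⟨εy, hεy, hby⟩ := Metric.nhds_basis_closedBall.mem_iff.1
      (Filter.inter_mem hKyn (hΩ.mem_nhds y.2))
    set ε : ℝ := min (min εx εy) (δ / (16 * α)) with hεdef
    have hε : 0 < ε := by
      have : 0 < δ / (16 * α) := by positivity
      exact lt_min (lt_min hεx hεy) this
    have hεle : 2 * α * ε ≤ δ / 4 := by
      have h1 : ε ≤ δ / (16 * α) := min_le_right _ _
      have h2 : 2 * α * ε ≤ 2 * α * (δ / (16 * α)) := by nlinarith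
      have h3 : 2 * α * (δ / (16 * α)) = δ / 8 := by field_simp; ring
      linarith
    have hsx : Metric.closedBall (x : X) ε ⊆ Kx ∩ Ω :=
      (Metric.closedBall_subset_closedBall ((min_le_left _ _).trans (min_le_left _ _))).trans hbx
    have hsy : Metric.closedBall (y : X) ε ⊆ Ky ∩ Ω :=
      (Metric.closedBall_subset_closedBall ((min_le_left _ _).trans (min_le_right _ _))).trans hby
    have hcx : IsCompact (Metric.closedBall (x : X) ε) :=
      hKxc.of_isClosed_subset Metric.isClosed_closedBall (hsx.trans inter_subset_left)
    have hcy : IsCompact (Metric.closedBall (y : X) ε) :=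
      hKyc.of_isClosed_subset Metric.isClosed_closedBall (hsy.trans inter_subset_left)
    -- the compact support set in Ω × Ω
    set e : ↥Ω × ↥Ω → X × X := fun p => ((p.1 : X), (p.2 : X)) with he
    have hemb : Topology.IsEmbedding e :=
      Topology.IsEmbedding.subtypeVal.prodMap Topology.IsEmbedding.subtypeVal
    have hrange : Metric.closedBall (x : X) ε ×ˢ Metric.closedBall (y : X) ε ⊆ range e := by
      rintro ⟨a, b⟩ ⟨ha, hb⟩
      exact ⟨(⟨a, (hsx ha).2⟩, ⟨b, (hsy hb).2⟩), rfl⟩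
    have hKcomp : IsCompact (e ⁻¹' (Metric.closedBall (x : X) ε ×ˢ Metric.closedBall (y : X) ε)) :=
      (hemb.isInducing.isCompact_preimage_iff hrange).2 (hcx.prod hcy)
    -- the test function
    set g : ↥Ω × ↥Ω → ℝ :=
      fun p => max 0 (1 - max (dist (p.1 : X) (x : X)) (dist (p.2 : X) (y : X)) / ε) with hgdef
    have hg0 : ∀ p, 0 ≤ g p := fun p => le_max_left _ _
    have hg1 : ∀ p, g p ≤ 1 := by
      intro p
      have hq : 0 ≤ max (dist (p.1 : X) (x : X)) (dist (p.2 : X) (y : X)) / ε := by positivity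
      exact max_le (by norm_num) (by linarith)
    have hgz : g z = 1 := by simp [hgdef, hz]
    have hgcont : Continuous g := by
      apply Continuous.max continuous_const
      apply Continuous.sub continuous_const
      apply Continuous.div_const
      exact Continuous.max
        ((continuous_subtype_val.comp continuous_fst).dist continuous_const)
        ((continuous_subtype_val.comp continuous_snd).dist continuous_const)
    have hgmeas : Measurable g := by
      apply Measurable.max measurable_const
      apply Measurable.sub measurable_const
      apply Measurable.div_const
      exact Measurable.max
        (((continuous_subtype_val.dist continuous_const).measurable).comp measurable_fst)
        (((continuous_subtype_val.dist continuous_const).measurable).comp measurable_snd)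
    have hgsupp : ∀ p, p ∉ e ⁻¹' (Metric.closedBall (x : X) ε ×ˢ Metric.closedBall (y : X) ε) →
        g p = 0 := by
      intro p hp
      have : ¬ (dist (p.1 : X) (x : X) ≤ ε ∧ dist (p.2 : X) (y : X) ≤ ε) := by
        simpa [he, Set.mem_prod, Metric.mem_closedBall] using hp
      have hmax : ε < max (dist (p.1 : X) (x : X)) (dist (p.2 : X) (y : X)) := by
        rcases not_and_or.1 this with h | h
        · exact lt_of_lt_of_le (not_le.1 h) (le_max_left _ _)
        · exact lt_of_lt_of_le (not_le.1 h) (le_max_right _ _)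
      have : 1 - max (dist (p.1 : X) (x : X)) (dist (p.2 : X) (y : X)) / ε ≤ 0 := by
        have : (1:ℝ) < max (dist (p.1 : X) (x : X)) (dist (p.2 : X) (y : X)) / ε :=
          (one_lt_div hε).2 hmax
        linarith
      exact max_eq_left this
    -- package g as a C₀ function
    have hzero : Tendsto g (cocompact (↥Ω × ↥Ω)) (𝓝 0) := by
      have hev : ∀ᶠ p in cocompact (↥Ω × ↥Ω), g p = 0 := by
        filter_upwards [Filter.mem_cocompact.mpr ⟨_, hKcomp, subset_rfl⟩] with p hp
        exact hgsupp p hp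
      exact tendsto_const_nhds.congr' (by filter_upwards [hev] with p hp using hp.symm)
    set fC : ZeroAtInftyContinuousMap (↥Ω × ↥Ω) ℝ := ⟨⟨g, hgcont⟩, hzero⟩ with hfC
    -- recovery sequence
    obtain ⟨μn, hfin, hwsc, hls⟩ := hlimsup (Measure.dirac z) inferInstance
    have hconv : Tendsto (fun n => ∫ p, g p ∂ μn n) atTop (𝓝 1) := by
      have h1 := hwsc fC
      have h2 : ∫ p, fC p ∂ (Measure.dirac z) = 1 := by
        rw [integral_dirac]
        exact hgz
      rw [h2] at h1
      exact h1
    -- quantities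
    set η : ℝ := (δ / 4) / (d x y + δ / 2) with hηdef
    have hden : 0 < d x y + δ / 2 := by linarith
    have hη0 : 0 < η := by positivity
    have hη1 : η < 1 := by
      rw [hηdef, div_lt_one hden]; linarith
    have hηeq : η * (d x y + δ / 2) = δ / 4 := div_mul_cancel₀ _ (ne_of_gt hden)
    have hevb : ∀ᶠ n in atTop, 1 - η < ∫ p, g p ∂ μn n :=
      hconv.eventually (eventually_gt_nhds (by linarith))
    have hJlt : Jfun d (Measure.dirac z) < ENNReal.ofReal (d x y + δ / 4) := by
      rw [hJd, ENNReal.ofReal_lt_ofReal_iff (by linarith)]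
      linarith
    have hevJ : ∀ᶠ n in atTop, Jfun (dn n) (μn n) < ENNReal.ofReal (d x y + δ / 4) :=
      eventually_lt_of_limsup_lt (lt_of_le_of_lt hls hJlt)
    have hupE : ∀ᶠ n in atTop, dn n x y < d x y + δ := by
      filter_upwards [hevb, hevJ] with n hb hJ
      haveI := hfin n
      set c : ℝ := max (dn n x y - 2 * α * ε) 0 with hcdef
      have hcnn : 0 ≤ c := le_max_right _ _
      -- pointwise bound
      have hpw : ∀ p : ↥Ω × ↥Ω, c * g p ≤ dn n p.1 p.2 := by
        intro p
        rcases eq_or_lt_of_le (hg0 p) with h0 | h0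
        · rw [← h0, mul_zero]; exact memD_nonneg hα (hdn n) _ _
        · have ht : max (dist (p.1 : X) (x : X)) (dist (p.2 : X) (y : X)) < ε := by
            by_contra hcc
            push_neg at hcc
            have h1 : (1:ℝ) ≤ max (dist (p.1 : X) (x : X)) (dist (p.2 : X) (y : X)) / ε :=
              (one_le_div hε).2 hcc
            have : g p = 0 := max_eq_left (by linarith)
            rw [this] at h0; exact lt_irrefl _ h0
          have h1 := memD_sub_le hα (hdn n) x y p.1 p.2
          have e1 : dist (x : X) (p.1 : X) < ε := by
            rw [dist_comm]; exact lt_of_le_of_lt (le_max_left _ _) ht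
          have e2 : dist (y : X) (p.2 : X) < ε := by
            rw [dist_comm]; exact lt_of_le_of_lt (le_max_right _ _) ht
          have m1 : α * dist (x : X) (p.1 : X) ≤ α * ε :=
            mul_le_mul_of_nonneg_left e1.le (le_of_lt hα0)
          have m2 : α * dist (y : X) (p.2 : X) ≤ α * ε :=
            mul_le_mul_of_nonneg_left e2.le (le_of_lt hα0)
          have hlb : dn n x y - 2 * α * ε ≤ dn n p.1 p.2 := by linarith
          have hcle : c ≤ dn n p.1 p.2 := max_le hlb (memD_nonneg hα (hdn n) _ _)
          have : c * g p ≤ c * 1 := mul_le_mul_of_nonneg_left (hg1 p) hcnn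
          rw [mul_one] at this
          linarith
      -- integral estimates
      have hint : Integrable g (μn n) := by
        refine (integrable_const (1:ℝ)).mono' hgmeas.aestronglyMeasurable ?_
        exact Eventually.of_forall fun p => by
          rw [Real.norm_eq_abs, abs_of_nonneg (hg0 p)]; exact hg1 p
      have step1 : ENNReal.ofReal (c * ∫ p, g p ∂ μn n)
          = ENNReal.ofReal (∫ p, c * g p ∂ μn n) := by
        rw [integral_const_mul]
      have step2 : ENNReal.ofReal (∫ p, c * g p ∂ μn n)
          ≤ ∫⁻ p, ENNReal.ofReal (c * g p) ∂ μn n :=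
        (ofReal_integral_eq_lintegral_ofReal (hint.const_mul c)
          (Eventually.of_forall fun p => mul_nonneg hcnn (hg0 p))).le
      have step3 : ∫⁻ p, ENNReal.ofReal (c * g p) ∂ μn n ≤ Jfun (dn n) (μn n) :=
        lintegral_mono fun p => ENNReal.ofReal_le_ofReal (hpw p)
      have hkey : ENNReal.ofReal (c * ∫ p, g p ∂ μn n) < ENNReal.ofReal (d x y + δ / 4) :=
        lt_of_le_of_lt (step1.le.trans (step2.trans step3)) hJ
      have hkey' : c * ∫ p, g p ∂ μn n < d x y + δ / 4 := by
        by_contra hcc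
        push_neg at hcc
        exact absurd (lt_of_lt_of_le hkey (ENNReal.ofReal_le_ofReal hcc)) (lt_irrefl _)
      have hc1 : c * (1 - η) ≤ c * ∫ p, g p ∂ μn n :=
        mul_le_mul_of_nonneg_left hb.le hcnn
      have hprod : (d x y + δ / 2) * (1 - η) = d x y + δ / 4 := by
        have hx : (d x y + δ / 2) * (1 - η) = (d x y + δ / 2) - η * (d x y + δ / 2) := by ring
        rw [hx, hηeq]; ring
      have hc2 : c * (1 - η) < (d x y + δ / 2) * (1 - η) := by
        rw [hprod]; linarith
      have hc3 : c < d x y + δ / 2 := lt_of_mul_lt_mul_right hc2 (by linarith)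
      have : dn n x y - 2 * α * ε ≤ c := le_max_left _ _
      linarith
    filter_upwards [hlowE, hupE] with n h1 h2
    rw [abs_sub_lt_iff]
    constructor <;> linarith
  -- From pointwise convergence and equi-Lipschitz bounds, uniform convergence on compacts
  intro K hK ε hε
  set r : ℝ := ε / (16 * α) with hrdef
  have hr : 0 < r := by positivity
  have hptN : ∀ p : ↥Ω × ↥Ω, ∃ N, ∀ n ≥ N, |dn n p.1 p.2 - d p.1 p.2| < ε / 2 := fun p =>
    eventually_atTop.1 (hpt p.1 p.2 (ε / 2) (half_pos hε))
  choose Nf hNf using hptN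
  obtain ⟨t, htK, hcov⟩ := hK.elim_nhds_subcover (fun p => Metric.ball p r)
    (fun p _ => Metric.ball_mem_nhds p hr)
  refine ⟨t.sup Nf, fun n hn p hp => ?_⟩
  obtain ⟨c, hct, hpc⟩ := Set.mem_iUnion₂.1 (hcov hp)
  have hn' : n ≥ Nf c := le_trans (Finset.le_sup hct) hn
  have h2 := hNf c n hn'
  have hdist : dist p c < r := Metric.mem_ball.1 hpc
  have e1 : dist (p.1 : X) (c.1 : X) < r := by
    rw [← Subtype.dist_eq]
    exact lt_of_le_of_lt (le_max_left _ _) (by rw [← Prod.dist_eq]; exact hdist)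
  have e2 : dist (p.2 : X) (c.2 : X) < r := by
    rw [← Subtype.dist_eq]
    exact lt_of_le_of_lt (le_max_right _ _) (by rw [← Prod.dist_eq]; exact hdist)
  have l1 := memD_sub_le hα (hdn n) p.1 p.2 c.1 c.2
  have l2 := memD_sub_le hα (hdn n) c.1 c.2 p.1 p.2
  have l3 := memD_sub_le hα hd p.1 p.2 c.1 c.2
  have l4 := memD_sub_le hα hd c.1 c.2 p.1 p.2
  rw [dist_comm ((c.1 : X)) ((p.1 : X)), dist_comm ((c.2 : X)) ((p.2 : X))] at l2 l4
  have m1 : α * dist (p.1 : X) (c.1 : X) < α * r := mul_lt_mul_of_pos_left e1 hα0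
  have m2 : α * dist (p.2 : X) (c.2 : X) < α * r := mul_lt_mul_of_pos_left e2 hα0
  have hαr : α * r = ε / 16 := by
    rw [hrdef]; field_simp
  rw [abs_sub_lt_iff] at h2 ⊢
  obtain ⟨h2a, h2b⟩ := h2
  constructor <;> nlinarith
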